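/- Weak formulation of second-order Riesz transforms on a finite cyclic group: let G = Z/NZ with discrete Laplacian Δ, and for mean-zero f define R² f = X⁺ X⁻ (-Δ)⁻¹ f (well-defined on mean-zero functions). Then for all mean-zero f, g: (R² f, g) = -2 ∫_0^∞ ∑_{τ=±} (1/2)(X^τ P_t f, X^τ P_t g) dt, where P_t = e^{tΔ}. -/

import Mathlib

open scoped BigOperators

/-- The discrete Laplacian on `ℤ/Nℤ` as a continuous linear operator. -/
noncomputable def cyclicLaplacian (N : ℕ) [NeZero N] :
    (ZMod N → ℂ) →L[ℂ] (ZMod N → ℂ) :=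
  LinearMap.toContinuousLinearMap
    { toFun := fun f x => f (x + 1) - 2 * f x + f (x - 1)
      map_add' := by intro f g; funext x; simp; ring
      map_smul' := by intro c f; funext x; simp; ring }

open NormedSpace Finset

variable {N : ℕ} [NeZero N]

lemma lap_apply (h : ZMod N → ℂ) (x : ZMod N) :
    cyclicLaplacian N h x = h (x + 1) - 2 * h x + h (x - 1) := rfl

lemma sum_shift {M : Type*} [AddCommMonoid M] (F : ZMod N → M) (c : ZMod N) :
    ∑ x, F (x + c) = ∑ x, F x :=
  Fintype.sum_equiv (Equiv.addRight c) _ _ (fun _ => rfl)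

lemma sum_by_parts (a b : ZMod N → ℂ) :
    ∑ x, (a (x + 1) - a x) * (starRingEnd ℂ) (b (x + 1) - b x)
      = -∑ x, (a (x + 1) - 2 * a x + a (x - 1)) * (starRingEnd ℂ) (b x) := by
  have e1 : ∑ x, a (x + 1) * (starRingEnd ℂ) (b (x + 1)) = ∑ x, a x * (starRingEnd ℂ) (b x) :=
    sum_shift (fun x => a x * (starRingEnd ℂ) (b x)) 1
  have e2 : ∑ x, a x * (starRingEnd ℂ) (b (x + 1)) = ∑ x, a (x - 1) * (starRingEnd ℂ) (b x) := by
    have h := sum_shift (fun x => a (x - 1) * (starRingEnd ℂ) (b x)) 1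
    simp only [add_sub_cancel_right] at h
    exact h
  simp only [map_sub, sub_mul, mul_sub, add_mul, two_mul,
    Finset.sum_sub_distrib, Finset.sum_add_distrib]
  linear_combination e1 - e2

lemma lap_symm (a b : ZMod N → ℂ) :
    ∑ x, a x * (starRingEnd ℂ) (b (x + 1) - 2 * b x + b (x - 1))
      = ∑ x, (a (x + 1) - 2 * a x + a (x - 1)) * (starRingEnd ℂ) (b x) := by
  have e2 : ∑ x, a x * (starRingEnd ℂ) (b (x + 1)) = ∑ x, a (x - 1) * (starRingEnd ℂ) (b x) := by
    have h := sum_shift (fun x => a (x - 1) * (starRingEnd ℂ) (b x)) 1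
    simp only [add_sub_cancel_right] at h
    exact h
  have e3 : ∑ x, a x * (starRingEnd ℂ) (b (x - 1)) = ∑ x, a (x + 1) * (starRingEnd ℂ) (b x) := by
    have h := sum_shift (fun x => a x * (starRingEnd ℂ) (b (x - 1))) 1
    simp only [add_sub_cancel_right] at h
    exact h.symm
  simp only [map_sub, map_add, map_mul, map_ofNat, sub_mul, mul_sub, add_mul, mul_add, two_mul,
    Finset.sum_sub_distrib, Finset.sum_add_distrib]
  linear_combination e2 + e3

lemma sum_lap (h : ZMod N → ℂ) : ∑ x, cyclicLaplacian N h x = 0 := by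
  have e1 : ∑ x, h (x + 1) = ∑ x, h x := sum_shift h 1
  have e3 : ∑ x, h (x - 1) = ∑ x, h x := by
    have h2 := sum_shift (fun x => h (x - 1)) 1
    simp only [add_sub_cancel_right] at h2
    exact h2.symm
  simp only [lap_apply, two_mul, sub_mul, add_mul, Finset.sum_sub_distrib, Finset.sum_add_distrib]
  linear_combination e1 + e3

/-- evaluation of an operator at `h` and `x`, as a real-linear CLM. -/
noncomputable def evR (h : ZMod N → ℂ) (x : ZMod N) :
    ((ZMod N → ℂ) →L[ℂ] (ZMod N → ℂ)) →L[ℝ] ℂ :=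
  ((ContinuousLinearMap.proj x).comp
    (ContinuousLinearMap.apply ℂ (ZMod N → ℂ) h)).restrictScalars ℝ

lemma evR_apply (h : ZMod N → ℂ) (x : ZMod N) (T : (ZMod N → ℂ) →L[ℂ] (ZMod N → ℂ)) :
    evR h x T = T h x := rfl

lemma hasDerivAt_P (h : ZMod N → ℂ) (x : ZMod N) (t : ℝ) :
    HasDerivAt (fun s : ℝ => exp (s • cyclicLaplacian N) h x)
      (exp (t • cyclicLaplacian N) (cyclicLaplacian N h) x) t := by
  have hd := (evR h x).hasFDerivAt.comp_hasDerivAt t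
    (hasDerivAt_exp_smul_const (cyclicLaplacian N) t)
  simpa [evR_apply, ContinuousLinearMap.mul_apply, Function.comp_def] using hd

lemma exp_comm (h : ZMod N → ℂ) (t : ℝ) :
    exp (t • cyclicLaplacian N) (cyclicLaplacian N h)
      = cyclicLaplacian N (exp (t • cyclicLaplacian N) h) := by
  have hc0 : Commute (t • cyclicLaplacian N) (cyclicLaplacian N) := by
    ext f x
    simp [ContinuousLinearMap.mul_apply, Commute, SemiconjBy]
  have hc : Commute (exp (t • cyclicLaplacian N)) (cyclicLaplacian N) :=
    hc0.exp_left
  calc exp (t • cyclicLaplacian N) (cyclicLaplacian N h)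
      = (exp (t • cyclicLaplacian N) * cyclicLaplacian N) h := rfl
    _ = (cyclicLaplacian N * exp (t • cyclicLaplacian N)) h := by rw [hc.eq]
    _ = _ := rfl

lemma continuous_P (h : ZMod N → ℂ) (x : ZMod N) :
    Continuous (fun t : ℝ => exp (t • cyclicLaplacian N) h x) := by
  have : Continuous (fun t : ℝ => t • cyclicLaplacian N) :=
    continuous_id.smul continuous_const
  exact (evR h x).continuous.comp ((continuous_iff_continuousAt.2 fun y => (exp_analytic (𝕂 := ℝ) y).continuousAt).comp this)

noncomputable def sumCLM (N : ℕ) [NeZero N] : (ZMod N → ℂ) →L[ℂ] ℂ :=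
  LinearMap.toContinuousLinearMap
    { toFun := fun h => ∑ x, h x
      map_add' := by intro a b; simp [Finset.sum_add_distrib]
      map_smul' := by intro c a; simp [Finset.mul_sum] }

/-- apply-at-`h` as a real-linear CLM. -/
noncomputable def evR' (h : ZMod N → ℂ) :
    ((ZMod N → ℂ) →L[ℂ] (ZMod N → ℂ)) →L[ℝ] (ZMod N → ℂ) :=
  (ContinuousLinearMap.apply ℂ (ZMod N → ℂ) h).restrictScalars ℝ



lemma sum_exp_eq_zero (h : ZMod N → ℂ) (hh : ∑ x, h x = 0) (t : ℝ) :
    ∑ x, exp (t • cyclicLaplacian N) h x = 0 := by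
  have hpow : ∀ n : ℕ, ∑ x, ((t • cyclicLaplacian N) ^ n) h x = 0 := by
    intro n
    induction n with
    | zero => simpa using hh
    | succ m _ =>
      have e : ((t • cyclicLaplacian N) ^ (m + 1)) h
          = (t • cyclicLaplacian N) (((t • cyclicLaplacian N) ^ m) h) := by
        rw [pow_succ']; rfl
      rw [e]
      have : ∀ x, (t • cyclicLaplacian N) (((t • cyclicLaplacian N) ^ m) h) x
          = t • (cyclicLaplacian N (((t • cyclicLaplacian N) ^ m) h) x) := by
        intro x; rfl
      simp only [this, ← Finset.smul_sum, sum_lap, smul_zero]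
  have hs : HasSum (fun n : ℕ => ((n.factorial : ℝ)⁻¹) • (t • cyclicLaplacian N) ^ n)
      (exp (t • cyclicLaplacian N)) :=
    NormedSpace.exp_series_hasSum_exp' (t • cyclicLaplacian N)
  have hL := hs.mapL (((sumCLM N).restrictScalars ℝ).comp (evR' h))
  have hzero : (fun n : ℕ => ((((sumCLM N).restrictScalars ℝ).comp (evR' h))
      (((n.factorial : ℝ)⁻¹) • (t • cyclicLaplacian N) ^ n))) = fun _ => (0 : ℂ) := by
    funext n
    rw [map_smul]
    have : ((((sumCLM N).restrictScalars ℝ).comp (evR' h)) ((t • cyclicLaplacian N) ^ n)) = 0 := by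
      show ∑ x, ((t • cyclicLaplacian N) ^ n) h x = 0
      exact hpow n
    rw [this, smul_zero]
  rw [hzero] at hL
  have := hL.unique hasSum_zero
  simpa [sumCLM, evR'] using this

lemma const_of_diff_zero (h : ZMod N → ℂ) (hd : ∀ x : ZMod N, h (x + 1) = h x) :
    ∀ x, h x = h 0 := by
  have key : ∀ n : ℕ, h (n : ZMod N) = h 0 := by
    intro n
    induction n with
    | zero => simp
    | succ m ih => rw [Nat.cast_add_one]; rw [hd]; exact ih
  intro x
  obtain ⟨n, rfl⟩ := ZMod.natCast_rightInverse.surjective x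
  exact key n

lemma spectral_gap (N : ℕ) [NeZero N] : ∃ c : ℝ, 0 < c ∧ ∀ h : ZMod N → ℂ, (∑ x, h x) = 0 →
    c * ∑ x, Complex.normSq (h x) ≤ ∑ x, Complex.normSq (h (x + 1) - h x) := by
  classical
  set q : (ZMod N → ℂ) → ℝ := fun h => ∑ x, Complex.normSq (h (x + 1) - h x) with hq
  set E : (ZMod N → ℂ) → ℝ := fun h => ∑ x, Complex.normSq (h x) with hE
  have hqnn : ∀ h, 0 ≤ q h := fun h => Finset.sum_nonneg fun x _ => Complex.normSq_nonneg _
  have hEnn : ∀ h, 0 ≤ E h := fun h => Finset.sum_nonneg fun x _ => Complex.normSq_nonneg _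
  have hqcont : Continuous q := by
    apply continuous_finset_sum
    intro x _
    exact Complex.continuous_normSq.comp ((continuous_apply (x + 1)).sub (continuous_apply x))
  have hEcont : Continuous E := by
    apply continuous_finset_sum
    intro x _
    exact Complex.continuous_normSq.comp (continuous_apply x)
  have hscont : Continuous (fun h : ZMod N → ℂ => ∑ x, h x) :=
    continuous_finset_sum _ fun x _ => continuous_apply x
  set S : Set (ZMod N → ℂ) := {h | (∑ x, h x) = 0 ∧ E h = 1} with hS
  -- scaling: any mean-zero h with E h ≠ 0 yields an element of S
  have hscale : ∀ h : ZMod N → ℂ, (∑ x, h x) = 0 → E h ≠ 0 →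
      ∃ h' ∈ S, q h = E h * q h' := by
    intro h hmean hE0
    have hEpos : 0 < E h := lt_of_le_of_ne (hEnn h) (Ne.symm hE0)
    set r : ℝ := Real.sqrt (E h) with hr
    have hrpos : 0 < r := Real.sqrt_pos.2 hEpos
    set h' : ZMod N → ℂ := fun x => (r : ℂ)⁻¹ * h x with hh'
    have hnormSq : ∀ z : ℂ, Complex.normSq ((r : ℂ)⁻¹ * z) = (E h)⁻¹ * Complex.normSq z := by
      intro z
      rw [Complex.normSq_mul, Complex.normSq_inv, Complex.normSq_ofReal]
      rw [Real.mul_self_sqrt hEpos.le]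
    refine ⟨h', ⟨?_, ?_⟩, ?_⟩
    · simp only [hh', ← Finset.mul_sum, hmean, mul_zero]
    · show (∑ x, Complex.normSq (h' x)) = 1
      simp only [hh', hnormSq, ← Finset.mul_sum]
      show (E h)⁻¹ * E h = 1
      exact inv_mul_cancel₀ hE0
    · show q h = E h * q h'
      have : ∀ x : ZMod N, Complex.normSq (h' (x + 1) - h' x)
          = (E h)⁻¹ * Complex.normSq (h (x + 1) - h x) := by
        intro x
        rw [hh']
        rw [← mul_sub, hnormSq]
      show q h = E h * ∑ x, Complex.normSq (h' (x + 1) - h' x)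
      simp only [this, ← Finset.mul_sum]
      rw [← mul_assoc, mul_inv_cancel₀ hE0, one_mul]
  -- members of S are never constant-zero, so q > 0 on S
  have hqpos : ∀ h ∈ S, 0 < q h := by
    intro h hh
    rcases lt_or_eq_of_le (hqnn h) with hlt | heq
    · exact hlt
    exfalso
    have hq0 : q h = 0 := heq.symm
    have hdiff : ∀ x : ZMod N, h (x + 1) = h x := by
      intro x
      have := (Finset.sum_eq_zero_iff_of_nonneg
        (fun x _ => Complex.normSq_nonneg (h (x + 1) - h x))).1 hq0 x (Finset.mem_univ x)
      exact sub_eq_zero.1 (Complex.normSq_eq_zero.1 this)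
    have hconst := const_of_diff_zero h hdiff
    have hsum0 : (∑ x, h x) = (N : ℂ) * h 0 := by
      rw [Finset.sum_congr rfl (fun x _ => hconst x)]
      simp [Finset.card_univ, mul_comm]
    have hNne : (N : ℂ) ≠ 0 := Nat.cast_ne_zero.2 (NeZero.ne N)
    have h00 : h 0 = 0 := by
      have := hh.1
      rw [hsum0] at this
      exact (mul_eq_zero.1 this).resolve_left hNne
    have hzero : ∀ x, h x = 0 := fun x => (hconst x).trans h00
    have : E h = 0 := Finset.sum_eq_zero fun x _ => by rw [hzero x, Complex.normSq_zero]
    rw [hh.2] at this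
    norm_num at this
  by_cases hSne : S.Nonempty
  · -- compactness: q attains a positive minimum c on S
    have hSclosed : IsClosed S := by
      have h1 : IsClosed {h : ZMod N → ℂ | (∑ x, h x) = 0} :=
        isClosed_eq hscont continuous_const
      have h2 : IsClosed {h : ZMod N → ℂ | E h = 1} :=
        isClosed_eq hEcont continuous_const
      exact h1.inter h2
    have hSbdd : Bornology.IsBounded S := by
      rw [Metric.isBounded_iff_subset_closedBall 0]
      refine ⟨1, fun h hh => ?_⟩
      rw [Metric.mem_closedBall, dist_zero_right]
      rw [pi_norm_le_iff_of_nonneg zero_le_one]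
      intro x
      have h1 : Complex.normSq (h x) ≤ 1 := by
        have := Finset.single_le_sum (f := fun x => Complex.normSq (h x))
          (fun x _ => Complex.normSq_nonneg _) (Finset.mem_univ x)
        calc Complex.normSq (h x) ≤ E h := this
          _ = 1 := hh.2
      have h2 : ‖h x‖ ^ 2 = Complex.normSq (h x) := by
        rw [Complex.sq_norm]
      nlinarith [norm_nonneg (h x)]
    have hScpt : IsCompact S := Metric.isCompact_of_isClosed_isBounded hSclosed hSbdd
    obtain ⟨h0, h0S, hmin⟩ := hScpt.exists_isMinOn hSne hqcont.continuousOn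
    refine ⟨q h0, hqpos h0 h0S, ?_⟩
    intro h hmean
    show q h0 * E h ≤ q h
    by_cases hE0 : E h = 0
    · rw [hE0, mul_zero]
      exact hqnn h
    · obtain ⟨h', h'S, hqh⟩ := hscale h hmean hE0
      rw [hqh]
      have : q h0 ≤ q h' := hmin h'S
      have hEpos : 0 < E h := lt_of_le_of_ne (hEnn h) (Ne.symm hE0)
      calc q h0 * E h = E h * q h0 := mul_comm _ _
        _ ≤ E h * q h' := by exact mul_le_mul_of_nonneg_left this hEpos.le
  · -- S empty: every mean-zero h has E h = 0
    refine ⟨1, one_pos, ?_⟩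
    intro h hmean
    show 1 * E h ≤ q h
    by_cases hE0 : E h = 0
    · rw [hE0, mul_zero]; exact hqnn h
    · obtain ⟨h', h'S, _⟩ := hscale h hmean hE0
      exact absurd ⟨h', h'S⟩ hSne


lemma hasDerivAt_F (h : ZMod N → ℂ) (x : ZMod N) (t : ℝ) :
    HasDerivAt (fun s : ℝ => exp (s • cyclicLaplacian N) h x)
      (cyclicLaplacian N (exp (t • cyclicLaplacian N) h) x) t := by
  have := hasDerivAt_P h x t
  rwa [exp_comm] at this

lemma hasDerivAt_normSq (h : ZMod N → ℂ) (x : ZMod N) (t : ℝ) :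
    HasDerivAt (fun s : ℝ => Complex.normSq (exp (s • cyclicLaplacian N) h x))
      ((cyclicLaplacian N (exp (t • cyclicLaplacian N) h) x
          * (starRingEnd ℂ) (exp (t • cyclicLaplacian N) h x)
        + exp (t • cyclicLaplacian N) h x
          * (starRingEnd ℂ) (cyclicLaplacian N (exp (t • cyclicLaplacian N) h) x)).re) t := by
  have h1 := (hasDerivAt_F h x t).fun_mul (hasDerivAt_F h x t).star
  have h2 := Complex.reCLM.hasFDerivAt.comp_hasDerivAt t h1
  have h3 : (fun s : ℝ => Complex.reCLM (exp (s • cyclicLaplacian N) h x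
      * star (exp (s • cyclicLaplacian N) h x)))
      = fun s : ℝ => Complex.normSq (exp (s • cyclicLaplacian N) h x) := by
    funext s
    simp only [Complex.reCLM_apply, ← starRingEnd_apply, Complex.mul_conj, Complex.ofReal_re]
  simp only [Function.comp_def] at h2
  rw [h3] at h2
  simpa only [Complex.reCLM_apply, starRingEnd_apply] using h2

lemma psi_deriv_eq (h : ZMod N → ℂ) (t : ℝ) :
    (∑ x, (cyclicLaplacian N (exp (t • cyclicLaplacian N) h) x
          * (starRingEnd ℂ) (exp (t • cyclicLaplacian N) h x)
        + exp (t • cyclicLaplacian N) h x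
          * (starRingEnd ℂ) (cyclicLaplacian N (exp (t • cyclicLaplacian N) h) x)).re)
      = -2 * ∑ x, Complex.normSq (exp (t • cyclicLaplacian N) h (x + 1)
          - exp (t • cyclicLaplacian N) h x) := by
  set F : ZMod N → ℂ := exp (t • cyclicLaplacian N) h with hF
  have hsymm : ∑ x, F x * (starRingEnd ℂ) (cyclicLaplacian N F x)
      = ∑ x, cyclicLaplacian N F x * (starRingEnd ℂ) (F x) := by
    simp only [lap_apply]
    exact lap_symm F F
  have hparts : ∑ x, (F (x + 1) - F x) * (starRingEnd ℂ) (F (x + 1) - F x)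
      = -∑ x, cyclicLaplacian N F x * (starRingEnd ℂ) (F x) := by
    simp only [lap_apply]
    exact sum_by_parts F F
  have hcast : ∑ x, (F (x + 1) - F x) * (starRingEnd ℂ) (F (x + 1) - F x)
      = ((∑ x, Complex.normSq (F (x + 1) - F x) : ℝ) : ℂ) := by
    push_cast
    exact Finset.sum_congr rfl fun x _ => Complex.mul_conj _
  have hAF : ∑ x, cyclicLaplacian N F x * (starRingEnd ℂ) (F x)
      = -((∑ x, Complex.normSq (F (x + 1) - F x) : ℝ) : ℂ) := by
    rw [← hcast]
    linear_combination hparts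
  have hmain : ∑ x, (cyclicLaplacian N F x * (starRingEnd ℂ) (F x)
        + F x * (starRingEnd ℂ) (cyclicLaplacian N F x))
      = ((-2 * ∑ x, Complex.normSq (F (x + 1) - F x) : ℝ) : ℂ) := by
    rw [Finset.sum_add_distrib, hsymm, hAF]
    push_cast
    ring
  calc (∑ x, (cyclicLaplacian N F x * (starRingEnd ℂ) (F x)
        + F x * (starRingEnd ℂ) (cyclicLaplacian N F x)).re)
      = (∑ x, (cyclicLaplacian N F x * (starRingEnd ℂ) (F x)
        + F x * (starRingEnd ℂ) (cyclicLaplacian N F x))).re := by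
        rw [Complex.re_sum]
    _ = -2 * ∑ x, Complex.normSq (F (x + 1) - F x) := by
        rw [hmain, Complex.ofReal_re]

lemma energy_decay (N : ℕ) [NeZero N] : ∃ c : ℝ, 0 < c ∧ ∀ h : ZMod N → ℂ, (∑ x, h x) = 0 →
    ∀ t : ℝ, 0 ≤ t →
      ∑ x, Complex.normSq (exp (t • cyclicLaplacian N) h x)
        ≤ Real.exp (-(2 * c) * t) * ∑ x, Complex.normSq (h x) := by
  obtain ⟨c, hc, hgap⟩ := spectral_gap N
  refine ⟨c, hc, ?_⟩
  intro h hmean t ht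
  set ψ : ℝ → ℝ := fun s => ∑ x, Complex.normSq (exp (s • cyclicLaplacian N) h x) with hψ
  set dψ : ℝ → ℝ := fun s => -2 * ∑ x, Complex.normSq (exp (s • cyclicLaplacian N) h (x + 1)
      - exp (s • cyclicLaplacian N) h x) with hdψ
  have hψd : ∀ s : ℝ, HasDerivAt ψ (dψ s) s := by
    intro s
    have := HasDerivAt.fun_sum (fun x (_ : x ∈ Finset.univ) => hasDerivAt_normSq h x s)
    rw [psi_deriv_eq h s] at this
    exact this
  have hψle : ∀ s : ℝ, dψ s ≤ -(2 * c) * ψ s := by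
    intro s
    have hgs := hgap (exp (s • cyclicLaplacian N) h) (sum_exp_eq_zero h hmean s)
    show -2 * ∑ x, Complex.normSq (exp (s • cyclicLaplacian N) h (x + 1)
        - exp (s • cyclicLaplacian N) h x) ≤ -(2 * c) * ψ s
    have : ψ s = ∑ x, Complex.normSq (exp (s • cyclicLaplacian N) h x) := rfl
    nlinarith [hgs]
  set ρ : ℝ → ℝ := fun s => Real.exp (2 * c * s) * ψ s with hρ
  have hρd : ∀ s : ℝ, HasDerivAt ρ
      (Real.exp (2 * c * s) * (2 * c) * ψ s + Real.exp (2 * c * s) * dψ s) s := by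
    intro s
    have hexp : HasDerivAt (fun y : ℝ => Real.exp (2 * c * y)) (Real.exp (2 * c * s) * (2 * c)) s := by
      have := ((hasDerivAt_id s).const_mul (2 * c)).exp
      simpa using this
    exact hexp.mul (hψd s)
  have hρd_nonpos : ∀ s : ℝ, Real.exp (2 * c * s) * (2 * c) * ψ s + Real.exp (2 * c * s) * dψ s ≤ 0 := by
    intro s
    have h1 := hψle s
    have h2 := Real.exp_pos (2 * c * s)
    nlinarith
  have hanti : AntitoneOn ρ (Set.Ici (0 : ℝ)) := by
    apply antitoneOn_of_deriv_nonpos (convex_Ici 0)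
    · intro s _
      exact (hρd s).continuousAt.continuousWithinAt
    · intro s _
      exact (hρd s).differentiableAt.differentiableWithinAt
    · intro s _
      rw [(hρd s).deriv]
      exact hρd_nonpos s
  have key : ρ t ≤ ρ 0 := hanti (Set.self_mem_Ici) (Set.mem_Ici.2 ht) ht
  have hρ0 : ρ 0 = ∑ x, Complex.normSq (h x) := by
    show Real.exp (2 * c * 0) * ψ 0 = _
    have hψ0 : ψ 0 = ∑ x, Complex.normSq (h x) := by
      have hz : ((0:ℝ) • cyclicLaplacian N) = 0 := by
        ext v x
        show (0:ℝ) • (cyclicLaplacian N v x) = 0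
        simp
      show (∑ x, Complex.normSq (exp ((0:ℝ) • cyclicLaplacian N) h x)) = _
      rw [hz, exp_zero]
      rfl
    rw [hψ0, mul_zero, Real.exp_zero, one_mul]
  -- conclude
  have hexp_pos : (0:ℝ) < Real.exp (2 * c * t) := Real.exp_pos _
  have : Real.exp (2 * c * t) * ψ t ≤ ∑ x, Complex.normSq (h x) := by
    rw [← hρ0]; exact key
  have hfin : ψ t ≤ Real.exp (-(2 * c) * t) * ∑ x, Complex.normSq (h x) := by
    rw [neg_mul, Real.exp_neg]
    calc ψ t = (Real.exp (2 * c * t))⁻¹ * (Real.exp (2 * c * t) * ψ t) := by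
          field_simp
      _ ≤ (Real.exp (2 * c * t))⁻¹ * ∑ x, Complex.normSq (h x) := by
          apply mul_le_mul_of_nonneg_left this (by positivity)
  exact hfin

lemma sum_prod_bound (a b : ZMod N → ℂ) :
    ‖∑ x, a x * (starRingEnd ℂ) (b x)‖
      ≤ ((∑ x, Complex.normSq (a x)) + ∑ x, Complex.normSq (b x)) / 2 := by
  calc ‖∑ x, a x * (starRingEnd ℂ) (b x)‖ ≤ ∑ x, ‖a x * (starRingEnd ℂ) (b x)‖ :=
        norm_sum_le _ _
    _ ≤ ∑ x, (Complex.normSq (a x) + Complex.normSq (b x)) / 2 := by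
        apply Finset.sum_le_sum
        intro x _
        rw [norm_mul, RCLike.norm_conj]
        have h2 : Complex.normSq (a x) = ‖a x‖ ^ 2 := by
          rw [Complex.normSq_eq_norm_sq]
        have h3 : Complex.normSq (b x) = ‖b x‖ ^ 2 := by
          rw [Complex.normSq_eq_norm_sq]
        nlinarith [sq_nonneg (‖a x‖ - ‖b x‖)]
    _ = _ := by rw [← Finset.sum_div, Finset.sum_add_distrib]

lemma integrand_eq (f g : ZMod N → ℂ) (t : ℝ) :
    ((1 / 2 : ℂ) * ∑ x,
        (exp (t • cyclicLaplacian N) f (x + 1) - exp (t • cyclicLaplacian N) f x)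
          * (starRingEnd ℂ) (exp (t • cyclicLaplacian N) g (x + 1)
            - exp (t • cyclicLaplacian N) g x)
      + (1 / 2 : ℂ) * ∑ x,
        (exp (t • cyclicLaplacian N) f x - exp (t • cyclicLaplacian N) f (x - 1))
          * (starRingEnd ℂ) (exp (t • cyclicLaplacian N) g x
            - exp (t • cyclicLaplacian N) g (x - 1)))
      = (-(2⁻¹ : ℂ)) • ∑ x,
          (exp (t • cyclicLaplacian N) (cyclicLaplacian N f) x
              * (starRingEnd ℂ) (exp (t • cyclicLaplacian N) g x)
            + exp (t • cyclicLaplacian N) f x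
              * (starRingEnd ℂ) (exp (t • cyclicLaplacian N) (cyclicLaplacian N g) x)) := by
  set F : ZMod N → ℂ := exp (t • cyclicLaplacian N) f with hF
  set G : ZMod N → ℂ := exp (t • cyclicLaplacian N) g with hG
  rw [exp_comm f t, exp_comm g t]
  have hhalf : ∑ x, (F x - F (x - 1)) * (starRingEnd ℂ) (G x - G (x - 1))
      = ∑ x, (F (x + 1) - F x) * (starRingEnd ℂ) (G (x + 1) - G x) := by
    have h1 := sum_shift
      (fun x => (F (x - 1 + 1) - F (x - 1)) * (starRingEnd ℂ) (G (x - 1 + 1) - G (x - 1))) 1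
    simp only [add_sub_cancel_right, sub_add_cancel] at h1
    exact h1.symm
  have hparts := sum_by_parts F G
  have hsymm := lap_symm F G
  simp only [lap_apply]
  rw [hhalf, hparts, Finset.sum_add_distrib, hsymm, smul_eq_mul]
  ring

set_option maxHeartbeats 2000000 in
/-- weak formulation of the second-order Riesz transform on `ℤ/Nℤ`:
for mean-zero `f, g`, with `u = (-Δ)⁻¹ f` (so `R² f = X⁺X⁻u = Δ u`) and
`P_t = e^{tΔ}`, one has
`(R² f, g) = -2 ∫₀^∞ ∑_{τ=±} (1/2)(X^τ P_t f, X^τ P_t g) dt`. -/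
theorem weak_formulation_second_order_riesz (N : ℕ) (hN : 2 ≤ N) [NeZero N]
    (f g u : ZMod N → ℂ)
    (hf : ∑ x, f x = 0) (hg : ∑ x, g x = 0) (hu : ∑ x, u x = 0)
    (huf : ∀ x, -(u (x + 1) - 2 * u x + u (x - 1)) = f x) :
    ∑ x, (u (x + 1) - 2 * u x + u (x - 1)) * (starRingEnd ℂ) (g x)
      = -2 * ∫ t in Set.Ioi (0 : ℝ),
          ((1 / 2 : ℂ) * ∑ x,
              (NormedSpace.exp (t • cyclicLaplacian N) f (x + 1)
                  - NormedSpace.exp (t • cyclicLaplacian N) f x)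
                * (starRingEnd ℂ) (NormedSpace.exp (t • cyclicLaplacian N) g (x + 1)
                  - NormedSpace.exp (t • cyclicLaplacian N) g x)
            + (1 / 2 : ℂ) * ∑ x,
              (NormedSpace.exp (t • cyclicLaplacian N) f x
                  - NormedSpace.exp (t • cyclicLaplacian N) f (x - 1))
                * (starRingEnd ℂ) (NormedSpace.exp (t • cyclicLaplacian N) g x
                  - NormedSpace.exp (t • cyclicLaplacian N) g (x - 1))) := by
  obtain ⟨c, hc, hdecay⟩ := energy_decay N
  set φ : ℝ → ℂ := fun t => ∑ x, exp (t • cyclicLaplacian N) f x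
      * (starRingEnd ℂ) (exp (t • cyclicLaplacian N) g x) with hφ
  set D : ℝ → ℂ := fun t => ∑ x,
      (exp (t • cyclicLaplacian N) (cyclicLaplacian N f) x
          * (starRingEnd ℂ) (exp (t • cyclicLaplacian N) g x)
        + exp (t • cyclicLaplacian N) f x
          * (starRingEnd ℂ) (exp (t • cyclicLaplacian N) (cyclicLaplacian N g) x)) with hD
  -- derivative of φ
  have hφd : ∀ t : ℝ, HasDerivAt φ (D t) t := by
    intro t
    apply HasDerivAt.fun_sum
    intro x _
    have h1 := (hasDerivAt_P f x t).fun_mul (hasDerivAt_P g x t).star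
    simpa only [starRingEnd_apply] using h1
  -- bound on D
  set B : ℝ := ((∑ x, Complex.normSq (cyclicLaplacian N f x)) + (∑ x, Complex.normSq (g x))
      + ((∑ x, Complex.normSq (f x)) + ∑ x, Complex.normSq (cyclicLaplacian N g x))) / 2 with hB
  have hDbound : ∀ t : ℝ, 0 ≤ t → ‖D t‖ ≤ Real.exp (-(2 * c) * t) * B := by
    intro t ht
    have e1 := hdecay (cyclicLaplacian N f) (sum_lap f) t ht
    have e2 := hdecay g hg t ht
    have e3 := hdecay f hf t ht
    have e4 := hdecay (cyclicLaplacian N g) (sum_lap g) t ht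
    have hsplit : D t = (∑ x, exp (t • cyclicLaplacian N) (cyclicLaplacian N f) x
          * (starRingEnd ℂ) (exp (t • cyclicLaplacian N) g x))
        + ∑ x, exp (t • cyclicLaplacian N) f x
          * (starRingEnd ℂ) (exp (t • cyclicLaplacian N) (cyclicLaplacian N g) x) := by
      rw [hD, ← Finset.sum_add_distrib]
    have b1 := sum_prod_bound (exp (t • cyclicLaplacian N) (cyclicLaplacian N f))
      (exp (t • cyclicLaplacian N) g)
    have b2 := sum_prod_bound (exp (t • cyclicLaplacian N) f)
      (exp (t • cyclicLaplacian N) (cyclicLaplacian N g))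
    have htri : ‖D t‖ ≤ ‖(∑ x, exp (t • cyclicLaplacian N) (cyclicLaplacian N f) x
          * (starRingEnd ℂ) (exp (t • cyclicLaplacian N) g x))‖
        + ‖∑ x, exp (t • cyclicLaplacian N) f x
          * (starRingEnd ℂ) (exp (t • cyclicLaplacian N) (cyclicLaplacian N g) x)‖ := by
      rw [hsplit]; exact norm_add_le _ _
    rw [hB]
    linarith
  -- continuity of D
  have hDcont : Continuous D := by
    rw [hD]
    apply continuous_finset_sum
    intro x _
    simp only [starRingEnd_apply]
    exact ((continuous_P (cyclicLaplacian N f) x).mul (continuous_P g x).star).add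
      ((continuous_P f x).mul (continuous_P (cyclicLaplacian N g) x).star)
  -- integrability of D on (0, ∞)
  have hDint : MeasureTheory.IntegrableOn D (Set.Ioi (0 : ℝ)) := by
    apply MeasureTheory.Integrable.mono'
      ((exp_neg_integrableOn_Ioi 0 (by positivity : (0:ℝ) < 2 * c)).mul_const B)
    · exact hDcont.aestronglyMeasurable.restrict
    · filter_upwards [MeasureTheory.ae_restrict_mem measurableSet_Ioi] with t ht
      exact hDbound t (le_of_lt ht)
  -- φ tends to 0 at +∞
  have hφbound : ∀ t : ℝ, 0 ≤ t → ‖φ t‖ ≤ Real.exp (-(2 * c) * t)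
      * (((∑ x, Complex.normSq (f x)) + ∑ x, Complex.normSq (g x)) / 2) := by
    intro t ht
    have e3 := hdecay f hf t ht
    have e2 := hdecay g hg t ht
    have b := sum_prod_bound (exp (t • cyclicLaplacian N) f) (exp (t • cyclicLaplacian N) g)
    have : ‖φ t‖ ≤ ((∑ x, Complex.normSq (exp (t • cyclicLaplacian N) f x))
        + ∑ x, Complex.normSq (exp (t • cyclicLaplacian N) g x)) / 2 := b
    linarith
  have hexp_tend : Filter.Tendsto (fun t : ℝ => Real.exp (-(2 * c) * t)
      * (((∑ x, Complex.normSq (f x)) + ∑ x, Complex.normSq (g x)) / 2))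
      Filter.atTop (nhds 0) := by
    have h1 : Filter.Tendsto (fun t : ℝ => (2 * c) * t) Filter.atTop Filter.atTop :=
      Filter.Tendsto.const_mul_atTop (by positivity) Filter.tendsto_id
    have h2 : Filter.Tendsto (fun t : ℝ => -(2 * c) * t) Filter.atTop Filter.atBot := by
      simp only [neg_mul]
      exact Filter.tendsto_neg_atTop_atBot.comp h1
    have h3 := Real.tendsto_exp_atBot.comp h2
    have h4 := h3.mul_const (((∑ x, Complex.normSq (f x)) + ∑ x, Complex.normSq (g x)) / 2)
    simpa using h4
  have hφtend : Filter.Tendsto φ Filter.atTop (nhds 0) := by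
    apply squeeze_zero_norm' _ hexp_tend
    filter_upwards [Filter.eventually_ge_atTop (0:ℝ)] with t ht
    exact hφbound t ht
  -- FTC
  have hFTC := MeasureTheory.integral_Ioi_of_hasDerivAt_of_tendsto
    ((hφd 0).continuousAt.continuousWithinAt) (fun t _ => hφd t) hDint hφtend
  -- identify the integrand
  have hIcongr : (∫ t in Set.Ioi (0 : ℝ),
          ((1 / 2 : ℂ) * ∑ x,
              (exp (t • cyclicLaplacian N) f (x + 1) - exp (t • cyclicLaplacian N) f x)
                * (starRingEnd ℂ) (exp (t • cyclicLaplacian N) g (x + 1)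
                  - exp (t • cyclicLaplacian N) g x)
            + (1 / 2 : ℂ) * ∑ x,
              (exp (t • cyclicLaplacian N) f x - exp (t • cyclicLaplacian N) f (x - 1))
                * (starRingEnd ℂ) (exp (t • cyclicLaplacian N) g x
                  - exp (t • cyclicLaplacian N) g (x - 1))))
      = ∫ t in Set.Ioi (0 : ℝ), (-(2⁻¹ : ℂ)) • D t := by
    apply MeasureTheory.integral_congr_ae
    apply Filter.EventuallyEq.of_eq
    funext t
    exact integrand_eq f g t
  rw [hIcongr, MeasureTheory.integral_smul, hFTC]
  have hφ0 : φ 0 = ∑ x, f x * (starRingEnd ℂ) (g x) := by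
    have hz : ((0:ℝ) • cyclicLaplacian N) = 0 := by
      ext v x
      show (0:ℝ) • (cyclicLaplacian N v x) = 0
      simp
    show (∑ x, exp ((0:ℝ) • cyclicLaplacian N) f x
        * (starRingEnd ℂ) (exp ((0:ℝ) • cyclicLaplacian N) g x)) = _
    rw [hz, exp_zero]
    rfl
  rw [hφ0]
  have hΔu : ∀ x : ZMod N, u (x + 1) - 2 * u x + u (x - 1) = -f x := by
    intro x
    linear_combination -(huf x)
  rw [Finset.sum_congr rfl (fun x _ => by rw [hΔu x])]
  have hneg : ∑ x, (-f x) * (starRingEnd ℂ) (g x) = -∑ x, f x * (starRingEnd ℂ) (g x) := by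
    rw [← Finset.sum_neg_distrib]
    exact Finset.sum_congr rfl fun x _ => by ring
  rw [hneg, smul_eq_mul]
  ring
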